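/- Let H ⊆ ℝ^d be closed, convex, closed under addition (H + H ⊆ H), with complement also closed under addition, and 0 ∈ ∂H. Then there exists y ∈ ℝ^d such that H = {x ∈ ℝ^d : ⟨x, y⟩ ≥ 0}. -/
import Mathlib


open RealInnerProductSpace

/-- A closed convex set `H ⊆ ℝ^d` which is closed under addition, whose complement is closed
under addition, and with `0 ∈ ∂H`, is a closed half-space. -/
theorem halfspace_characterization {d : ℕ} (H : Set (EuclideanSpace ℝ (Fin d)))
    (hclosed : IsClosed H) (hconv : Convex ℝ H)
    (hplus : ∀ a ∈ H, ∀ b ∈ H, a + b ∈ H)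
    (hplusc : ∀ a ∈ Hᶜ, ∀ b ∈ Hᶜ, a + b ∈ Hᶜ)
    (h0 : (0 : EuclideanSpace ℝ (Fin d)) ∈ frontier H) :
    ∃ y : EuclideanSpace ℝ (Fin d), H = {x : EuclideanSpace ℝ (Fin d) | 0 ≤ ⟪x, y⟫} := by
  have h0H : (0 : EuclideanSpace ℝ (Fin d)) ∈ H := by
    have := h0.1
    rwa [hclosed.closure_eq] at this
  -- If x ∉ H then -x ∈ H
  have hsym : ∀ x, x ∉ H → -x ∈ H := by
    intro x hx
    by_contra hnx
    have := hplusc x hx (-x) hnx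
    rw [add_neg_cancel] at this
    exact this h0H
  -- there is a point outside H
  have hne : ∃ z, z ∉ H := by
    by_contra hc
    push_neg at hc
    have : H = Set.univ := Set.eq_univ_of_forall hc
    have h2 := h0.2
    rw [this, interior_univ] at h2
    exact h2 trivial
  obtain ⟨z, hz⟩ := hne
  -- natural multiples stay in H
  have hmul : ∀ (n : ℕ), ∀ h ∈ H, ((n : ℝ) + 1) • h ∈ H := by
    intro n
    induction n with
    | zero => intro h hh; simpa using hh
    | succ n ih =>
      intro h hh
      have : ((n : ℝ) + 1 + 1) • h = ((n : ℝ) + 1) • h + h := by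
        rw [add_smul, one_smul]
      rw [Nat.cast_succ, this]
      exact hplus _ (ih h hh) h hh
  -- project z onto H
  obtain ⟨p, hpH, hpmin⟩ :=
    exists_norm_eq_iInf_of_complete_convex ⟨0, h0H⟩ hclosed.isComplete hconv z
  rw [norm_eq_iInf_iff_real_inner_le_zero hconv hpH] at hpmin
  set y : EuclideanSpace ℝ (Fin d) := p - z with hy
  have hyne : y ≠ 0 := by
    intro h
    rw [hy, sub_eq_zero] at h
    exact hz (h ▸ hpH)
  -- ⟪w - p, y⟫ ≥ 0 for all w ∈ H
  have hkey : ∀ w ∈ H, 0 ≤ ⟪w - p, y⟫ := by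
    intro w hw
    have := hpmin w hw
    have h1 : ⟪z - p, w - p⟫ = -⟪w - p, y⟫ := by
      rw [hy, real_inner_comm, inner_sub_right, inner_sub_right]
      ring
    rw [h1] at this
    linarith
  have hpy : ⟪p, y⟫ ≤ 0 := by
    have := hkey 0 h0H
    rw [zero_sub, inner_neg_left] at this
    linarith
  -- H lies in the halfspace
  have hHin : ∀ w ∈ H, 0 ≤ ⟪w, y⟫ := by
    intro w hw
    by_contra hlt
    push_neg at hlt
    obtain ⟨n, hn⟩ := exists_nat_gt (⟪p, y⟫ / ⟪w, y⟫)
    have hmem := hkey _ (hmul n w hw)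
    rw [inner_sub_left, real_inner_smul_left] at hmem
    have h2 : (n : ℝ) * ⟪w, y⟫ < ⟪p, y⟫ := by
      have := (div_lt_iff_of_neg hlt).mp hn
      linarith
    nlinarith
  have hpy0 : ⟪p, y⟫ = 0 := le_antisymm hpy (hHin p hpH)
  have hzy : ⟪z, y⟫ = -‖y‖ ^ 2 := by
    have : z = p - y := by rw [hy]; abel
    rw [this, inner_sub_left, hpy0, real_inner_self_eq_norm_sq]
    ring
  -- open halfspace is inside H
  have hopen : ∀ x, 0 < ⟪x, y⟫ → x ∈ H := by
    intro x hx
    by_contra hxH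
    have := hHin _ (hsym x hxH)
    rw [inner_neg_left] at this
    linarith
  refine ⟨y, Set.Subset.antisymm (fun w hw => hHin w hw) ?_⟩
  intro x hx
  simp only [Set.mem_setOf_eq] at hx
  -- x is the limit of x + (1/(n+1)) • y which are in the open halfspace
  have hseq : ∀ n : ℕ, x + (1 / ((n : ℝ) + 1)) • y ∈ H := by
    intro n
    apply hopen
    have hpos : (0 : ℝ) < 1 / ((n : ℝ) + 1) := by positivity
    have hy2 : (0 : ℝ) < ‖y‖ ^ 2 := pow_pos (norm_pos_iff.mpr hyne) 2
    rw [inner_add_left, real_inner_smul_left, real_inner_self_eq_norm_sq]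
    nlinarith
  have htend : Filter.Tendsto (fun n : ℕ => x + (1 / ((n : ℝ) + 1)) • y)
      Filter.atTop (nhds x) := by
    have h1 : Filter.Tendsto (fun n : ℕ => (1 / ((n : ℝ) + 1))) Filter.atTop (nhds 0) :=
      tendsto_one_div_add_atTop_nhds_zero_nat
    have h2 : Filter.Tendsto (fun n : ℕ => (1 / ((n : ℝ) + 1)) • y) Filter.atTop
        (nhds ((0 : ℝ) • y)) := h1.smul_const y
    rw [zero_smul] at h2
    simpa using (tendsto_const_nhds.add h2 :
      Filter.Tendsto (fun n : ℕ => x + (1 / ((n : ℝ) + 1)) • y) Filter.atTop (nhds (x + 0)))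
  exact hclosed.mem_of_tendsto htend (Filter.Eventually.of_forall hseq)
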